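/- The function h(x) = (sin(x) − x·cos(x))/(x − sin(x)) is strictly decreasing on (0, π/2). -/

import Mathlib

open Real

lemma sin_ge_sub_cube' {t : ℝ} (ht : 0 ≤ t) : t - t ^ 3 / 6 ≤ Real.sin t := by
  have h : MonotoneOn (fun t : ℝ => Real.sin t - (t - t ^ 3 / 6)) (Set.Ici 0) := by
    apply monotoneOn_of_deriv_nonneg (convex_Ici 0)
    · fun_prop
    · intro x hx
      exact Differentiable.differentiableOn (by fun_prop) x hx
    · intro x hx
      have hd : HasDerivAt (fun t : ℝ => Real.sin t - (t - t ^ 3 / 6))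
          (Real.cos x - (1 - x ^ 2 / 2)) x := by
        have h1 := Real.hasDerivAt_sin x
        have h2 : HasDerivAt (fun t : ℝ => t - t ^ 3 / 6) (1 - 3 * x ^ 2 / 6) x := by
          have := (hasDerivAt_id x).sub ((hasDerivAt_pow 3 x).div_const 6)
          exact this.congr_deriv (by norm_num)
        exact (h1.sub h2).congr_deriv (by ring)
      rw [hd.deriv]
      have := Real.one_sub_sq_div_two_le_cos (x := x)
      linarith
  have := h Set.self_mem_Ici (Set.mem_Ici.mpr ht) ht
  norm_num at this
  linarith

lemma cos_le_quartic {t : ℝ} (ht : 0 ≤ t) : Real.cos t ≤ 1 - t ^ 2 / 2 + t ^ 4 / 24 := by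
  have h : MonotoneOn (fun t : ℝ => (1 - t ^ 2 / 2 + t ^ 4 / 24) - Real.cos t) (Set.Ici 0) := by
    apply monotoneOn_of_deriv_nonneg (convex_Ici 0)
    · fun_prop
    · intro x hx
      exact Differentiable.differentiableOn (by fun_prop) x hx
    · intro x hx
      have hd : HasDerivAt (fun t : ℝ => (1 - t ^ 2 / 2 + t ^ 4 / 24) - Real.cos t)
          ((-x + x ^ 3 / 6) + Real.sin x) x := by
        have h1 := Real.hasDerivAt_cos x
        have h2 : HasDerivAt (fun t : ℝ => 1 - t ^ 2 / 2 + t ^ 4 / 24)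
            (0 - 2 * x / 2 + 4 * x ^ 3 / 24) x := by
          have := (((hasDerivAt_const x (1:ℝ)).sub ((hasDerivAt_pow 2 x).div_const 2)).add
            ((hasDerivAt_pow 4 x).div_const 24))
          exact this.congr_deriv (by push_cast; ring)
        exact (h2.sub h1).congr_deriv (by ring)
      rw [hd.deriv]
      have hx' : (0:ℝ) ≤ x := le_of_lt (by simpa using hx)
      have := sin_ge_sub_cube' hx'
      linarith
  have := h Set.self_mem_Ici (Set.mem_Ici.mpr ht) ht
  norm_num at this
  linarith

lemma core_ineq {t : ℝ} (ht : 0 < t) (ht1 : t < 1) :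
    2 * t ^ 2 * Real.cos t < t * Real.sin t + Real.sin t ^ 2 * Real.cos t := by
  have hs : t - t ^ 3 / 6 ≤ Real.sin t := sin_ge_sub_cube' ht.le
  have ht2 : t ^ 2 < 1 := by nlinarith
  have ht3 : t ^ 3 ≤ t := by nlinarith [mul_pos ht ht]
  have hp : 0 < t - t ^ 3 / 6 := by linarith
  have hc1 : 1 - t ^ 2 / 2 ≤ Real.cos t := Real.one_sub_sq_div_two_le_cos
  have hc2 : Real.cos t ≤ 1 - t ^ 2 / 2 + t ^ 4 / 24 := cos_le_quartic ht.le
  have hcpos : (0:ℝ) < 1 - t ^ 2 / 2 := by nlinarith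
  have h1 : (t - t ^ 3 / 6) ^ 2 ≤ Real.sin t ^ 2 := by nlinarith
  have h2 : (t - t ^ 3 / 6) ^ 2 * (1 - t ^ 2 / 2) ≤ Real.sin t ^ 2 * Real.cos t :=
    mul_le_mul h1 hc1 hcpos.le (sq_nonneg _)
  have h3 : t * (t - t ^ 3 / 6) ≤ t * Real.sin t := by nlinarith
  have h4 : 2 * t ^ 2 * Real.cos t ≤ 2 * t ^ 2 * (1 - t ^ 2 / 2 + t ^ 4 / 24) := by nlinarith
  have key : 2 * t ^ 2 * (1 - t ^ 2 / 2 + t ^ 4 / 24)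
      < t * (t - t ^ 3 / 6) + (t - t ^ 3 / 6) ^ 2 * (1 - t ^ 2 / 2) := by
    have h8 : t ^ 8 ≤ t ^ 6 := by nlinarith [pow_pos ht 6, pow_pos ht 8]
    have h6 : 0 < t ^ 6 := pow_pos ht 6
    nlinarith
  linarith

lemma num_neg {x : ℝ} (hx : 0 < x) (hx2 : x < π / 2) :
    x * Real.sin x * (x - Real.sin x) - (Real.sin x - x * Real.cos x) * (1 - Real.cos x) < 0 := by
  set t := x / 2 with hts
  have ht : 0 < t := by positivity
  have ht1 : t < 1 := by
    have : π < 4 := by nlinarith [Real.pi_lt_d2]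
    simp only [hts]; nlinarith
  have hx2t : x = 2 * t := by rw [hts]; ring
  have hspos : 0 < Real.sin t := Real.sin_pos_of_pos_of_lt_pi ht (by nlinarith [Real.pi_gt_three])
  have hcore := core_ineq ht ht1
  have pyth := Real.sin_sq_add_cos_sq t
  rw [hx2t, Real.sin_two_mul, Real.cos_two_mul]
  have hE : 2 * t * (2 * Real.sin t * Real.cos t) * (2 * t - 2 * Real.sin t * Real.cos t) -
      (2 * Real.sin t * Real.cos t - 2 * t * (2 * Real.cos t ^ 2 - 1)) *
        (1 - (2 * Real.cos t ^ 2 - 1))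
      = 4 * Real.sin t * (2 * t ^ 2 * Real.cos t -
        (t * Real.sin t + Real.sin t ^ 2 * Real.cos t)) := by
    linear_combination (2 * (2 * Real.sin t * Real.cos t - 2 * t * (2 * Real.cos t ^ 2 - 1))) * pyth
  rw [hE]
  apply mul_neg_of_pos_of_neg (by positivity)
  linarith

theorem h_strict_anti :
    StrictAntiOn (fun x : ℝ => (Real.sin x - x * Real.cos x) / (x - Real.sin x))
      (Set.Ioo 0 (π/2)) := by
  apply strictAntiOn_of_deriv_neg (convex_Ioo 0 (π/2))
  · apply ContinuousOn.div
    · fun_prop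
    · fun_prop
    · intro x hx
      have := Real.sin_lt hx.1
      linarith
  · intro x hx
    rw [interior_Ioo] at hx
    have hden : x - Real.sin x ≠ 0 := by
      have := Real.sin_lt hx.1; linarith
    have hg : HasDerivAt (fun x : ℝ => Real.sin x - x * Real.cos x) (x * Real.sin x) x := by
      have h1 : HasDerivAt Real.sin (Real.cos x) x := Real.hasDerivAt_sin x
      have h2 : HasDerivAt (fun x : ℝ => x * Real.cos x)
          (1 * Real.cos x + x * (-Real.sin x)) x :=
        (hasDerivAt_id x).mul (Real.hasDerivAt_cos x)
      exact (h1.sub h2).congr_deriv (by ring)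
    have hh : HasDerivAt (fun x : ℝ => x - Real.sin x) (1 - Real.cos x) x :=
      (hasDerivAt_id x).sub (Real.hasDerivAt_sin x)
    have hf := hg.fun_div hh hden
    rw [hf.deriv]
    apply div_neg_of_neg_of_pos
    · have := num_neg hx.1 hx.2
      nlinarith [this]
    · have := Real.sin_lt hx.1
      positivity
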